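/- Let f* : [−π, π] → ℝ be defined by f*(t) = π²/4 − t² for t ∈ [−π/2, π/2] and f*(t) = 0 for t ∈ [−π, −π/2) ∪ (π/2, π], with Fourier coefficients f̂*(k) = (1/(2π)) ∫_{−π}^{π} f*(t) exp(−ikt) dt. For m ∈ ℕ define V_k = f̂*(0) if k = 0, V_k = 2 f̂*(k) if 1 ≤ k ≤ m, and V_k = 2 ((2m − k + 1)/(m + 1)) f̂*(k) if m + 1 ≤ k ≤ 2m. Then for every m ≥ 1 one has min_{0 ≤ k ≤ 2m} |V_k| ≥ 1/(4π m³ (m + 1)); in particular min_{0 ≤ k ≤ 2m} |V_k| decays at most polynomially in m. -/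

import Mathlib

open MeasureTheory

/-- The function `f*(t) = π²/4 - t²` on `[-π/2, π/2]`, extended by `0`. -/
noncomputable def fstar (t : ℝ) : ℝ :=
  if |t| ≤ Real.pi / 2 then Real.pi ^ 2 / 4 - t ^ 2 else 0

/-- The `k`-th Fourier coefficient `f̂*(k) = (1/(2π)) ∫_{-π}^{π} f*(t) exp(-ikt) dt`. -/
noncomputable def fstarFourierCoeff (k : ℤ) : ℂ :=
  (1 / (2 * (Real.pi : ℂ))) *
    ∫ t in (-Real.pi)..Real.pi, (fstar t : ℂ) * Complex.exp (-Complex.I * (k : ℂ) * (t : ℂ))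

/-- The coefficients of the de la Vallée Poussin type operator: `V 0 = f̂*(0)`,
`V k = 2 f̂*(k)` for `1 ≤ k ≤ m`, and `V k = 2 ((2m - k + 1)/(m + 1)) f̂*(k)` for
`m + 1 ≤ k ≤ 2m`. -/
noncomputable def Vcoeff (m k : ℕ) : ℂ :=
  if k = 0 then fstarFourierCoeff 0
  else if k ≤ m then 2 * fstarFourierCoeff (k : ℤ)
  else 2 * (((2 * m - k + 1 : ℕ) : ℂ) / ((m : ℂ) + 1)) * fstarFourierCoeff (k : ℤ)

open Complex

lemma fstar_eq_max (t : ℝ) : fstar t = max (Real.pi ^ 2 / 4 - t ^ 2) 0 := by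
  unfold fstar
  split_ifs with h
  · rcases abs_le.mp h with ⟨h1, h2⟩
    have hpi := Real.pi_pos
    rw [max_eq_left]; nlinarith
  · rw [max_eq_right]
    have : Real.pi / 2 < |t| := not_le.mp h
    nlinarith [_root_.sq_abs t, abs_nonneg t, Real.pi_pos]

lemma fstar_cont : Continuous fstar := by
  have : fstar = fun t => max (Real.pi ^ 2 / 4 - t ^ 2) 0 := funext fstar_eq_max
  rw [this]; continuity

lemma fstar_zero_of_ge (t : ℝ) (h : Real.pi/2 ≤ |t|) : fstar t = 0 := by
  rw [fstar_eq_max, max_eq_right]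
  nlinarith [_root_.sq_abs t, abs_nonneg t, Real.pi_pos]

lemma fstar_eq_of_le (t : ℝ) (h : |t| ≤ Real.pi/2) : fstar t = Real.pi^2/4 - t^2 := if_pos h

/-- reduction to the middle interval -/
lemma integral_reduce (k : ℤ) :
    (∫ t in (-Real.pi)..Real.pi, (fstar t : ℂ) * Complex.exp (-I * (k : ℂ) * (t : ℂ)))
    = ∫ t in (-(Real.pi/2))..(Real.pi/2),
        ((Real.pi^2/4 - t^2 : ℝ) : ℂ) * Complex.exp (-I * (k : ℂ) * (t : ℂ)) := by
  have hg : Continuous fun t : ℝ => (fstar t : ℂ) * Complex.exp (-I * (k : ℂ) * (t : ℂ)) := by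
    apply Continuous.mul
    · exact Complex.continuous_ofReal.comp fstar_cont
    · exact Complex.continuous_exp.comp (by continuity)
  have hpi := Real.pi_pos
  set g : ℝ → ℂ := fun t => (fstar t : ℂ) * Complex.exp (-I * (k : ℂ) * (t : ℂ)) with hgdef
  have i1 : IntervalIntegrable g volume (-Real.pi) (-(Real.pi/2)) := hg.intervalIntegrable _ _
  have i2 : IntervalIntegrable g volume (-(Real.pi/2)) (Real.pi/2) := hg.intervalIntegrable _ _
  have i3 : IntervalIntegrable g volume (Real.pi/2) Real.pi := hg.intervalIntegrable _ _
  have e1 : (∫ t in (-Real.pi)..(-(Real.pi/2)), g t) = 0 := by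
    rw [intervalIntegral.integral_congr (g := fun _ => (0:ℂ)) ?_, intervalIntegral.integral_const]
    · simp
    · intro t ht
      rw [Set.uIcc_of_le (by linarith)] at ht
      have : Real.pi/2 ≤ |t| := by
        rw [abs_of_nonpos (by linarith [ht.2])]
        linarith [ht.2]
      simp [hgdef, fstar_zero_of_ge t this]
  have e3 : (∫ t in (Real.pi/2)..Real.pi, g t) = 0 := by
    rw [intervalIntegral.integral_congr (g := fun _ => (0:ℂ)) ?_, intervalIntegral.integral_const]
    · simp
    · intro t ht
      rw [Set.uIcc_of_le (by linarith)] at ht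
      have : Real.pi/2 ≤ |t| := le_trans ht.1 (le_abs_self t)
      simp [hgdef, fstar_zero_of_ge t this]
  have e2 : (∫ t in (-(Real.pi/2))..(Real.pi/2), g t)
      = ∫ t in (-(Real.pi/2))..(Real.pi/2),
          ((Real.pi^2/4 - t^2 : ℝ) : ℂ) * Complex.exp (-I * (k : ℂ) * (t : ℂ)) := by
    apply intervalIntegral.integral_congr
    intro t ht
    rw [Set.uIcc_of_le (by linarith)] at ht
    have : |t| ≤ Real.pi/2 := abs_le.mpr ⟨ht.1, ht.2⟩
    simp [hgdef, fstar_eq_of_le t this]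
  calc (∫ t in (-Real.pi)..Real.pi, g t)
      = (∫ t in (-Real.pi)..(-(Real.pi/2)), g t) + ∫ t in (-(Real.pi/2))..Real.pi, g t := by
        rw [intervalIntegral.integral_add_adjacent_intervals i1 (i2.trans i3)]
    _ = (∫ t in (-Real.pi)..(-(Real.pi/2)), g t) + ((∫ t in (-(Real.pi/2))..(Real.pi/2), g t)
          + ∫ t in (Real.pi/2)..Real.pi, g t) := by
        rw [intervalIntegral.integral_add_adjacent_intervals i2 i3]
    _ = _ := by rw [e1, e3, e2]; ring

noncomputable def GG (K : ℂ) (t : ℝ) : ℂ :=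
  Complex.exp (-I*K*t) * ((Real.pi:ℂ)^2*I*K^2/4 + 2*I - 2*t*K - I*t^2*K^2)

lemma GG_deriv (K : ℂ) (t : ℝ) :
    HasDerivAt (GG K) (K^3 * (((Real.pi^2/4 - t^2 : ℝ)) : ℂ) * Complex.exp (-I*K*t)) t := by
  have he : HasDerivAt (fun t : ℝ => Complex.exp (-I*K*t)) (-I*K * Complex.exp (-I*K*t)) t := by
    have h1 : HasDerivAt (fun z : ℂ => Complex.exp (-I*K*z)) (-I*K * Complex.exp (-I*K*t)) (t:ℂ) := by
      simpa [mul_comm] using ((hasDerivAt_id (t:ℂ)).const_mul (-I*K)).cexp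
    exact h1.comp_ofReal
  have hc : HasDerivAt (fun t : ℝ => (t:ℂ)) 1 t := by
    simpa using (hasDerivAt_id t).ofReal_comp
  have h2 : HasDerivAt (fun t : ℝ => (t:ℂ)^2) (2*t) t := by
    simpa using ((hasDerivAt_pow 2 t).ofReal_comp)
  have hp : HasDerivAt (fun t : ℝ => ((Real.pi:ℂ)^2*I*K^2/4 + 2*I - 2*(t:ℂ)*K - I*(t:ℂ)^2*K^2))
      (-2*K - I*(2*t)*K^2) t := by
    have := (((hasDerivAt_const t ((Real.pi:ℂ)^2*I*K^2/4 + 2*I)).sub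
      ((hc.const_mul (2:ℂ)).mul_const K)).sub ((h2.const_mul I).mul_const (K^2)))
    refine this.congr_deriv ?_
    push_cast; ring
  have := he.mul hp
  refine this.congr_deriv ?_
  have h3 : I^3 = -I := by rw [pow_succ, Complex.I_sq]; ring
  push_cast
  ring_nf
  simp only [Complex.I_sq, h3]
  ring

lemma exp_neg_I_real (k : ℕ) (x : ℝ) :
    Complex.exp (-I*(k:ℂ)*(x:ℂ)) = ((Real.cos (k*x) : ℝ) : ℂ) - ((Real.sin (k*x) : ℝ) : ℂ) * I := by
  have h : -I*(k:ℂ)*(x:ℂ) = ((-((k:ℝ)*x) : ℝ) : ℂ) * I := by push_cast; ring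
  rw [h, Complex.exp_mul_I, ← Complex.ofReal_cos, ← Complex.ofReal_sin, Real.cos_neg, Real.sin_neg]
  push_cast; ring

/-- the middle integral, for k ≠ 0 -/
lemma integral_middle (k : ℕ) (hk : 1 ≤ k) :
    (∫ t in (-(Real.pi/2))..(Real.pi/2),
        ((Real.pi^2/4 - t^2 : ℝ) : ℂ) * Complex.exp (-I * (k : ℂ) * (t : ℂ)))
    = (4 * (Real.sin (k*(Real.pi/2)) : ℝ) - 2*Real.pi*(Real.cos (k*(Real.pi/2)) : ℝ)*(k:ℂ)) / (k:ℂ)^3 := by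
  have hK : ((k:ℂ)) ≠ 0 := Nat.cast_ne_zero.mpr (by omega)
  set K := (k:ℂ)
  have hint : (∫ t in (-(Real.pi/2))..(Real.pi/2),
      K^3 * ((Real.pi^2/4 - t^2 : ℝ) : ℂ) * Complex.exp (-I * K * (t : ℂ)))
      = GG K (Real.pi/2) - GG K (-(Real.pi/2)) := by
    apply intervalIntegral.integral_eq_sub_of_hasDerivAt
    · intro t _; exact GG_deriv K t
    · apply Continuous.intervalIntegrable
      apply Continuous.mul
      · exact continuous_const.mul (Complex.continuous_ofReal.comp (by continuity))
      · exact Complex.continuous_exp.comp (by continuity)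
  have hGG : GG K (Real.pi/2) - GG K (-(Real.pi/2))
      = 4 * ((Real.sin (k*(Real.pi/2)) : ℝ):ℂ) - 2*Real.pi*((Real.cos (k*(Real.pi/2)) : ℝ):ℂ)*K := by
    unfold GG
    have h1 : Complex.exp (-I*K*((Real.pi/2 : ℝ):ℂ))
        = ((Real.cos (k*(Real.pi/2)) : ℝ) : ℂ) - ((Real.sin (k*(Real.pi/2)) : ℝ) : ℂ) * I :=
      exp_neg_I_real k (Real.pi/2)
    have h2 : Complex.exp (-I*K*((-(Real.pi/2) : ℝ):ℂ))
        = ((Real.cos (k*(Real.pi/2)) : ℝ) : ℂ) + ((Real.sin (k*(Real.pi/2)) : ℝ) : ℂ) * I := by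
      rw [exp_neg_I_real k (-(Real.pi/2))]
      rw [mul_neg, Real.cos_neg, Real.sin_neg]
      push_cast; ring
    rw [h1, h2]
    push_cast
    ring_nf
    simp only [Complex.I_sq]
    ring
  have hfact : (∫ t in (-(Real.pi/2))..(Real.pi/2),
      K^3 * ((Real.pi^2/4 - t^2 : ℝ) : ℂ) * Complex.exp (-I * K * (t : ℂ)))
      = K^3 * ∫ t in (-(Real.pi/2))..(Real.pi/2),
        ((Real.pi^2/4 - t^2 : ℝ) : ℂ) * Complex.exp (-I * K * (t : ℂ)) := by
    rw [← intervalIntegral.integral_const_mul]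
    congr 1
    funext t; ring
  rw [hfact] at hint
  rw [eq_div_iff (pow_ne_zero 3 hK)]
  rw [mul_comm] at hint
  rw [hint, hGG]

lemma coeff_eq (k : ℕ) (hk : 1 ≤ k) :
    fstarFourierCoeff (k : ℤ)
      = ((2*Real.sin (k*(Real.pi/2))/(Real.pi*k^3) - Real.cos (k*(Real.pi/2))/k^2 : ℝ) : ℂ) := by
  have hkR : (k:ℝ) ≠ 0 := Nat.cast_ne_zero.mpr (by omega)
  have hkC : (k:ℂ) ≠ 0 := Nat.cast_ne_zero.mpr (by omega)
  have hpiC : (Real.pi:ℂ) ≠ 0 := Complex.ofReal_ne_zero.mpr Real.pi_ne_zero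
  unfold fstarFourierCoeff
  have hred := integral_reduce (k:ℤ)
  simp only [Int.cast_natCast] at hred ⊢
  rw [hred, integral_middle k hk]
  push_cast
  field_simp
  ring

lemma coeff_zero : fstarFourierCoeff 0 = ((Real.pi^2/12 : ℝ) : ℂ) := by
  have hpiC : (Real.pi:ℂ) ≠ 0 := Complex.ofReal_ne_zero.mpr Real.pi_ne_zero
  unfold fstarFourierCoeff
  have hred := integral_reduce 0
  simp only [Int.cast_zero] at hred ⊢
  rw [hred]
  have h1 : (∫ t in (-(Real.pi/2))..(Real.pi/2),
      ((Real.pi^2/4 - t^2 : ℝ) : ℂ) * Complex.exp (-I * 0 * (t:ℂ)))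
      = ((Real.pi^3/6 : ℝ) : ℂ) := by
    simp only [mul_zero, zero_mul, neg_zero, Complex.exp_zero, mul_one]
    rw [intervalIntegral.integral_ofReal]
    norm_cast
    have h2 : IntervalIntegrable (fun _ : ℝ => Real.pi^2/4) volume (-(Real.pi/2)) (Real.pi/2) :=
      intervalIntegrable_const
    have h3 : IntervalIntegrable (fun t : ℝ => t^2) volume (-(Real.pi/2)) (Real.pi/2) :=
      (continuous_pow 2).intervalIntegrable _ _
    rw [intervalIntegral.integral_sub h2 h3, intervalIntegral.integral_const,
      integral_pow]
    rw [smul_eq_mul]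
    norm_num
    ring
  rw [h1]
  push_cast
  field_simp
  ring

lemma abs_coeff_ge (k : ℕ) (hk : 1 ≤ k) :
    2 / (Real.pi * (k:ℝ)^3) ≤ ‖fstarFourierCoeff (k : ℤ)‖ := by
  have hpi := Real.pi_pos
  have hkR : (0:ℝ) < (k:ℝ) := by exact_mod_cast hk
  rw [coeff_eq k hk, Complex.norm_real, Real.norm_eq_abs]
  rcases Nat.even_or_odd k with ⟨j, hj⟩ | ⟨j, hj⟩
  · -- k = j + j, even
    have hθ : (k:ℝ)*(Real.pi/2) = (j:ℝ)*Real.pi := by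
      subst hj; push_cast; ring
    have hs : Real.sin ((k:ℝ)*(Real.pi/2)) = 0 := by
      rw [hθ]; exact Real.sin_nat_mul_pi j
    have hc : |Real.cos ((k:ℝ)*(Real.pi/2))| = 1 := by
      rw [hθ]
      exact_mod_cast Real.abs_cos_int_mul_pi (j:ℤ)
    rw [hs]
    have : |2*0/(Real.pi*(k:ℝ)^3) - Real.cos ((k:ℝ)*(Real.pi/2))/(k:ℝ)^2|
        = 1/(k:ℝ)^2 := by
      rw [mul_zero, zero_div, zero_sub, abs_neg, abs_div, hc, abs_of_pos (by positivity)]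
    rw [this]
    rw [div_le_div_iff₀ (by positivity) (by positivity)]
    have hpi3 : (3:ℝ) ≤ Real.pi := Real.pi_gt_three.le
    have hk1 : (1:ℝ) ≤ (k:ℝ) := by exact_mod_cast hk
    nlinarith [mul_nonneg (by linarith : (0:ℝ) ≤ Real.pi - 3) (by positivity : (0:ℝ) ≤ (k:ℝ)^3),
      mul_nonneg (by linarith : (0:ℝ) ≤ (k:ℝ) - 1) (by positivity : (0:ℝ) ≤ (k:ℝ)^2)]
  · -- k = 2j+1, odd
    have hθ : (k:ℝ)*(Real.pi/2) = (j:ℝ)*Real.pi + Real.pi/2 := by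
      subst hj; push_cast; ring
    have hs : |Real.sin ((k:ℝ)*(Real.pi/2))| = 1 := by
      rw [hθ, Real.sin_add, Real.sin_nat_mul_pi, Real.cos_pi_div_two, Real.sin_pi_div_two]
      simpa using (by exact_mod_cast Real.abs_cos_int_mul_pi (j:ℤ) : |Real.cos ((j:ℝ)*Real.pi)| = 1)
    have hc : Real.cos ((k:ℝ)*(Real.pi/2)) = 0 := by
      rw [hθ, Real.cos_add, Real.sin_nat_mul_pi, Real.cos_pi_div_two, Real.sin_pi_div_two]
      ring
    rw [hc]
    have : |2*Real.sin ((k:ℝ)*(Real.pi/2))/(Real.pi*(k:ℝ)^3) - 0/(k:ℝ)^2|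
        = 2/(Real.pi*(k:ℝ)^3) := by
      rw [zero_div, sub_zero, abs_div, abs_mul, hs,
        abs_of_pos (show (0:ℝ) < Real.pi*(k:ℝ)^3 from by positivity)]
      norm_num
    rw [this]

/-- For every `m ≥ 1` one has
`min_{0 ≤ k ≤ 2m} |V_k| ≥ 1/(4π m³ (m+1))`; in particular the minimum decays at most
polynomially in `m`. -/
theorem vallee_poussin_coefficient_lower_bound (m : ℕ) (hm : 1 ≤ m) :
    ∀ k : ℕ, k ≤ 2 * m →
      1 / (4 * Real.pi * (m : ℝ) ^ 3 * ((m : ℝ) + 1)) ≤ ‖Vcoeff m k‖ := by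
  intro k hk2m
  have hpi := Real.pi_pos
  have hpi3 : (3:ℝ) ≤ Real.pi := Real.pi_gt_three.le
  have hm1 : (1:ℝ) ≤ (m:ℝ) := by exact_mod_cast hm
  have hm3 : (1:ℝ) ≤ (m:ℝ)^3 := by simpa using pow_le_pow_left₀ (by norm_num : (0:ℝ) ≤ 1) hm1 3
  unfold Vcoeff
  split_ifs with h0 hkm
  · -- k = 0
    rw [coeff_zero, Complex.norm_real, Real.norm_eq_abs, abs_of_pos (by positivity)]
    have h8 : 8*Real.pi ≤ 4*Real.pi*(m:ℝ)^3*((m:ℝ)+1) := by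
      nlinarith [mul_nonneg (mul_nonneg hpi.le (by linarith : (0:ℝ) ≤ (m:ℝ)^3 - 1)) (by linarith : (0:ℝ) ≤ (m:ℝ)+1)]
    have s1 : 1/(4*Real.pi*(m:ℝ)^3*((m:ℝ)+1)) ≤ 1/(8*Real.pi) :=
      one_div_le_one_div_of_le (by positivity) h8
    have s2 : 1/(8*Real.pi) ≤ Real.pi^2/12 := by
      rw [div_le_div_iff₀ (by positivity) (by norm_num)]
      have hsq : (9:ℝ) ≤ Real.pi^2 := by nlinarith
      nlinarith
    linarith
  · -- 1 ≤ k ≤ m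
    have hk1 : 1 ≤ k := Nat.one_le_iff_ne_zero.mpr h0
    have hkR : (1:ℝ) ≤ (k:ℝ) := by exact_mod_cast hk1
    have hkm' : (k:ℝ) ≤ (m:ℝ) := by exact_mod_cast hkm
    have hk3 : (k:ℝ)^3 ≤ (m:ℝ)^3 := pow_le_pow_left₀ (by positivity) hkm' 3
    have hA := abs_coeff_ge k hk1
    rw [norm_mul, Complex.norm_two]
    have step : 1/(4*Real.pi*(m:ℝ)^3*((m:ℝ)+1)) ≤ 2 * (2/(Real.pi*(k:ℝ)^3)) := by
      rw [show (2:ℝ) * (2/(Real.pi*(k:ℝ)^3)) = 4/(Real.pi*(k:ℝ)^3) by ring]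
      rw [div_le_div_iff₀ (by positivity) (by positivity)]
      nlinarith [mul_nonneg hpi.le (by linarith : (0:ℝ) ≤ (m:ℝ)^3 - (k:ℝ)^3),
        mul_nonneg (mul_nonneg hpi.le (by positivity : (0:ℝ) ≤ (m:ℝ)^3)) (by linarith : (0:ℝ) ≤ 16*(m:ℝ)+15)]
    calc 1/(4*Real.pi*(m:ℝ)^3*((m:ℝ)+1)) ≤ 2 * (2/(Real.pi*(k:ℝ)^3)) := step
      _ ≤ 2 * ‖fstarFourierCoeff (k:ℤ)‖ := by gcongr
  · -- m < k ≤ 2m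
    have hk1 : 1 ≤ k := Nat.one_le_iff_ne_zero.mpr h0
    have hkR : (1:ℝ) ≤ (k:ℝ) := by exact_mod_cast hk1
    have hk2mR : (k:ℝ) ≤ 2*(m:ℝ) := by exact_mod_cast hk2m
    have hk3 : (k:ℝ)^3 ≤ 8*(m:ℝ)^3 := by
      have := pow_le_pow_left₀ (by positivity : (0:ℝ) ≤ (k:ℝ)) hk2mR 3
      nlinarith
    have hA := abs_coeff_ge k hk1
    have hA0 : 0 ≤ ‖fstarFourierCoeff (k:ℤ)‖ := norm_nonneg _
    set n : ℕ := 2*m - k + 1 with hn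
    have hn1 : (1:ℝ) ≤ (n:ℝ) := by
      have : 1 ≤ n := by omega
      exact_mod_cast this
    have habs : ‖2 * ((n:ℂ)/((m:ℂ)+1)) * fstarFourierCoeff (k:ℤ)‖
        = 2 * ((n:ℝ)/((m:ℝ)+1)) * ‖fstarFourierCoeff (k:ℤ)‖ := by
      rw [norm_mul, norm_mul, Complex.norm_two, norm_div, Complex.norm_natCast]
      congr 2
      rw [show ((m:ℂ)+1) = ((m+1:ℕ):ℂ) by push_cast; ring, Complex.norm_natCast]
      push_cast; ring
    rw [habs]
    have step : 1/(4*Real.pi*(m:ℝ)^3*((m:ℝ)+1)) ≤ 2 * (1/((m:ℝ)+1)) * (2/(Real.pi*(k:ℝ)^3)) := by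
      have hmid : 2 * (1/((m:ℝ)+1)) * (2/(Real.pi*(k:ℝ)^3)) = 4/(((m:ℝ)+1)*(Real.pi*(k:ℝ)^3)) := by
        field_simp
        norm_num
      rw [hmid, div_le_div_iff₀ (by positivity) (by positivity)]
      nlinarith [mul_nonneg (by positivity : (0:ℝ) ≤ ((m:ℝ)+1)*Real.pi) (by linarith : (0:ℝ) ≤ 8*(m:ℝ)^3 - (k:ℝ)^3),
        (by positivity : (0:ℝ) ≤ Real.pi*(m:ℝ)^3*((m:ℝ)+1))]
    calc 1/(4*Real.pi*(m:ℝ)^3*((m:ℝ)+1)) ≤ 2 * (1/((m:ℝ)+1)) * (2/(Real.pi*(k:ℝ)^3)) := step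
      _ ≤ 2 * ((n:ℝ)/((m:ℝ)+1)) * ‖fstarFourierCoeff (k:ℤ)‖ := by gcongr
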